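/- Let M and N be positive semidefinite quadratic forms on a finite-dimensional real vector space with N of rank one and ker M ⊆ ker N. Then there exists λ > 0 such that M - λN is positive semidefinite and rank(M - λN) = rank(M) - 1. -/

import Mathlib

open Matrix

private lemma dp_symm' {s : ℕ} {A : Matrix (Fin s) (Fin s) ℝ} (h : A.IsHermitian)
    (x y : Fin s → ℝ) : x ⬝ᵥ (A *ᵥ y) = (A *ᵥ x) ⬝ᵥ y := by
  rw [Matrix.dotProduct_mulVec, ← Matrix.mulVec_transpose, show Aᵀ = A from h]

private lemma cs_psd' {s : ℕ} {M : Matrix (Fin s) (Fin s) ℝ} (hM : M.PosSemidef)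
    (x u : Fin s → ℝ) :
    (x ⬝ᵥ (M *ᵥ u))^2 ≤ (x ⬝ᵥ (M *ᵥ x)) * (u ⬝ᵥ (M *ᵥ u)) := by
  have hsym : u ⬝ᵥ (M *ᵥ x) = x ⬝ᵥ (M *ᵥ u) := by
    rw [dp_symm' hM.1 u x, dotProduct_comm]
  have key : ∀ r : ℝ, 0 ≤ (u ⬝ᵥ (M *ᵥ u)) * (r*r) + (2*(x ⬝ᵥ (M *ᵥ u))) * r + (x ⬝ᵥ (M *ᵥ x)) := by
    intro r
    have h0 : 0 ≤ (x + r • u) ⬝ᵥ (M *ᵥ (x + r • u)) := by simpa using hM.dotProduct_mulVec_nonneg (x + r • u)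
    rw [Matrix.mulVec_add, Matrix.mulVec_smul, dotProduct_add, add_dotProduct,
      add_dotProduct, dotProduct_smul, dotProduct_smul,
      smul_dotProduct, smul_dotProduct, smul_eq_mul, smul_eq_mul, smul_eq_mul,
      hsym, smul_eq_mul] at h0
    nlinarith [h0]
  have hd := discrim_le_zero key
  rw [discrim] at hd
  nlinarith [hd]

private lemma rank_one_decomp' {s : ℕ} {N : Matrix (Fin s) (Fin s) ℝ}
    (hN : N.PosSemidef) (hrk : N.rank = 1) :
    ∃ w : Fin s → ℝ, w ≠ 0 ∧ ∀ x, N *ᵥ x = (w ⬝ᵥ x) • w := by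
  have h1 : Module.finrank ℝ (LinearMap.range N.mulVecLin) = 1 := hrk
  rw [finrank_eq_one_iff'] at h1
  obtain ⟨⟨w₀, hw₀mem⟩, hw₀ne, hspan⟩ := h1
  have hw₀ : w₀ ≠ 0 := by
    simpa [Submodule.mk_eq_zero] using hw₀ne
  have hmul : ∀ x : Fin s → ℝ, ∃ c : ℝ, N *ᵥ x = c • w₀ := by
    intro x
    obtain ⟨c, hc⟩ := hspan ⟨N *ᵥ x, ⟨x, rfl⟩⟩
    exact ⟨c, by simpa [eq_comm] using congrArg Subtype.val hc⟩
  have hNw₀ : N *ᵥ w₀ ≠ 0 := by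
    intro h0
    have hall : ∀ x, N *ᵥ x = 0 := by
      intro x
      obtain ⟨c, hc⟩ := hmul x
      have : w₀ ⬝ᵥ (N *ᵥ x) = 0 := by rw [dp_symm' hN.1, h0, zero_dotProduct]
      rw [hc, dotProduct_smul, smul_eq_mul] at this
      have hww : w₀ ⬝ᵥ w₀ ≠ 0 := fun h => hw₀ (dotProduct_self_eq_zero.mp h)
      have : c = 0 := by
        rcases mul_eq_zero.mp this with h | h
        · exact h
        · exact absurd h hww
      rw [hc, this, zero_smul]
    obtain ⟨y, hy⟩ := hw₀mem
    exact hw₀ (by rw [← hy]; exact hall y)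
  obtain ⟨c₀, hc₀⟩ := hmul w₀
  have hww : (0:ℝ) < w₀ ⬝ᵥ w₀ := by
    have h0 : (0:ℝ) ≤ w₀ ⬝ᵥ w₀ := Finset.sum_nonneg fun i _ => mul_self_nonneg _
    exact lt_of_le_of_ne h0 (fun h => hw₀ (dotProduct_self_eq_zero.mp h.symm))
  have hc₀pos : 0 < c₀ := by
    have hpsd : 0 ≤ w₀ ⬝ᵥ (N *ᵥ w₀) := by simpa using hN.dotProduct_mulVec_nonneg w₀
    rw [hc₀, dotProduct_smul, smul_eq_mul] at hpsd
    have hne : c₀ ≠ 0 := by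
      intro h0; rw [h0, zero_smul] at hc₀; exact hNw₀ hc₀
    have : 0 ≤ c₀ := nonneg_of_mul_nonneg_left hpsd hww
    exact lt_of_le_of_ne this (Ne.symm hne)
  set d : ℝ := c₀ / (w₀ ⬝ᵥ w₀) with hd
  have hdpos : 0 < d := div_pos hc₀pos hww
  refine ⟨Real.sqrt d • w₀, ?_, ?_⟩
  · intro h
    apply hw₀
    have : Real.sqrt d ≠ 0 := by positivity
    simpa [this] using h
  · intro x
    obtain ⟨c, hc⟩ := hmul x
    have key : c₀ * (w₀ ⬝ᵥ x) = c * (w₀ ⬝ᵥ w₀) := by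
      have h1 : w₀ ⬝ᵥ (N *ᵥ x) = (N *ᵥ w₀) ⬝ᵥ x := dp_symm' hN.1 w₀ x
      rw [hc, hc₀] at h1
      simpa [dotProduct_smul, smul_dotProduct, smul_eq_mul] using h1.symm
    have hcval : c = d * (w₀ ⬝ᵥ x) := by
      rw [hd, div_mul_eq_mul_div, eq_div_iff hww.ne']
      linarith [key, hww]
    have hsq : Real.sqrt d * Real.sqrt d = d := Real.mul_self_sqrt hdpos.le
    rw [hc, hcval]
    simp only [smul_dotProduct, dotProduct_smul, smul_smul, smul_eq_mul]
    rw [show Real.sqrt d * (w₀ ⬝ᵥ x) * Real.sqrt d = d * (w₀ ⬝ᵥ x) by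
      rw [mul_comm _ (Real.sqrt d), ← mul_assoc, hsq]]

private lemma mem_range_of_orth' {s : ℕ} {M : Matrix (Fin s) (Fin s) ℝ} (hM : M.PosSemidef)
    {w : Fin s → ℝ} (hw : ∀ x, M *ᵥ x = 0 → w ⬝ᵥ x = 0) :
    w ∈ LinearMap.range M.mulVecLin := by
  set R := LinearMap.range M.mulVecLin
  set K := LinearMap.ker M.mulVecLin
  have hRK : R ⊓ K = ⊥ := by
    rw [Submodule.eq_bot_iff]
    rintro x ⟨⟨u, rfl⟩, hxK⟩
    have hzero : M *ᵥ (M *ᵥ u) = 0 := hxK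
    have h1 : (M *ᵥ u) ⬝ᵥ (M *ᵥ u) = 0 := by
      rw [← dp_symm' hM.1 u (M *ᵥ u), hzero, dotProduct_zero]
    exact dotProduct_self_eq_zero.mp h1
  have hsum : R ⊔ K = ⊤ := by
    apply Submodule.eq_top_of_finrank_eq
    have h1 := Submodule.finrank_sup_add_finrank_inf_eq R K
    rw [hRK] at h1
    have h2 := LinearMap.finrank_range_add_finrank_ker M.mulVecLin
    simp only [finrank_bot, add_zero] at h1
    rw [h1, h2]
  have hwmem : w ∈ R ⊔ K := hsum ▸ Submodule.mem_top
  rw [Submodule.mem_sup] at hwmem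
  obtain ⟨a, haR, b, hbK, hab⟩ := hwmem
  have hbker : M *ᵥ b = 0 := hbK
  have hwb : w ⬝ᵥ b = 0 := hw b hbker
  have hab' : a ⬝ᵥ b = 0 := by
    obtain ⟨u, rfl⟩ := haR
    rw [show M.mulVecLin u ⬝ᵥ b = u ⬝ᵥ (M *ᵥ b) from (dp_symm' hM.1 u b).symm, hbker,
      dotProduct_zero]
  have hb0 : b = 0 := by
    apply dotProduct_self_eq_zero.mp
    have : (a + b) ⬝ᵥ b = 0 := hab ▸ hwb
    rw [add_dotProduct, hab'] at this
    linarith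
  rw [← hab, hb0, add_zero]
  exact haR

/-- rank reduction: if `M`, `N` are psd with `N` of rank one and
`ker M ⊆ ker N`, then for some `λ > 0` the matrix `M - λN` is psd of rank
`rank M - 1`. -/
theorem stmt_16 (s : ℕ) (M N : Matrix (Fin s) (Fin s) ℝ)
    (hM : M.PosSemidef) (hN : N.PosSemidef) (hrk : N.rank = 1)
    (hker : LinearMap.ker M.mulVecLin ≤ LinearMap.ker N.mulVecLin) :
    ∃ lam : ℝ, 0 < lam ∧ (M - lam • N).PosSemidef ∧
      (M - lam • N).rank = M.rank - 1 := by
  obtain ⟨w, hwne, hNw⟩ := rank_one_decomp' hN hrk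
  -- w is orthogonal to ker M
  have horth : ∀ x, M *ᵥ x = 0 → w ⬝ᵥ x = 0 := by
    intro x hx
    have hxK : x ∈ LinearMap.ker M.mulVecLin := hx
    have hxN : N *ᵥ x = 0 := hker hxK
    rw [hNw x] at hxN
    have hww : w ⬝ᵥ w ≠ 0 := fun h => hwne (dotProduct_self_eq_zero.mp h)
    by_contra hne
    exact hwne (by simpa [hne] using hxN)
  obtain ⟨u, hu⟩ := mem_range_of_orth' hM horth
  have hu' : M *ᵥ u = w := hu
  set t : ℝ := u ⬝ᵥ (M *ᵥ u) with ht
  have htpos : 0 < t := by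
    have h0 : 0 ≤ t := by simpa [ht] using hM.dotProduct_mulVec_nonneg u
    refine lt_of_le_of_ne h0 fun h => ?_
    have : M *ᵥ u = 0 := by
      have := (hM.dotProduct_mulVec_zero_iff u).mp (by simpa using h.symm)
      exact this
    exact hwne (hu' ▸ this)
  set lam : ℝ := 1 / t with hlam
  have hlampos : 0 < lam := by positivity
  -- action of M - lam • N
  have hM' : ∀ x, (M - lam • N) *ᵥ x = M *ᵥ x - (lam * (w ⬝ᵥ x)) • w := by
    intro x
    rw [Matrix.sub_mulVec, Matrix.smul_mulVec, hNw x, smul_smul]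
  have hsymu : ∀ x, u ⬝ᵥ (M *ᵥ x) = x ⬝ᵥ (M *ᵥ u) := by
    intro x
    rw [dp_symm' hM.1 u x, dotProduct_comm]
  have hxw : ∀ x : Fin s → ℝ, x ⬝ᵥ w = w ⬝ᵥ x := fun x => dotProduct_comm x w
  -- quadratic form identity
  have hquad : ∀ x, x ⬝ᵥ ((M - lam • N) *ᵥ x) = x ⬝ᵥ (M *ᵥ x) - lam * (w ⬝ᵥ x)^2 := by
    intro x
    rw [hM' x, dotProduct_sub, dotProduct_smul, smul_eq_mul, hxw x]
    ring
  -- positive semidefiniteness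
  have hpsd : (M - lam • N).PosSemidef := by
    refine Matrix.PosSemidef.of_dotProduct_mulVec_nonneg ?_ ?_
    · refine hM.1.sub ?_
      show (lam • N)ᴴ = lam • N
      rw [Matrix.conjTranspose_smul, hN.1, star_trivial]
    · intro x
      have hCS := cs_psd' hM x u
      rw [hu'] at hCS
      have htw : t = u ⬝ᵥ w := by rw [ht, hu']
      rw [← htw] at hCS
      have h0 : 0 ≤ x ⬝ᵥ ((M - lam • N) *ᵥ x) := by
        rw [hquad x, ← hxw x, sub_nonneg, hlam, div_mul_eq_mul_div, one_mul,
          div_le_iff₀ htpos]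
        exact hCS
      simpa using h0
  refine ⟨lam, hlampos, hpsd, ?_⟩
  -- kernel of M - lam • N
  set K := LinearMap.ker M.mulVecLin with hK
  have hune : u ≠ 0 := by
    intro h0
    apply hwne
    rw [← hu', h0, Matrix.mulVec_zero]
  have hkernew : LinearMap.ker (M - lam • N).mulVecLin = K ⊔ Submodule.span ℝ {u} := by
    apply le_antisymm
    · intro x hx
      have hx' : (M - lam • N) *ᵥ x = 0 := hx
      rw [hM' x] at hx'
      have hMx : M *ᵥ x = (lam * (w ⬝ᵥ x)) • w := by
        rw [← sub_eq_zero]; exact hx'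
      set b : ℝ := w ⬝ᵥ x with hb
      have hxMx : x ⬝ᵥ (M *ᵥ x) = lam * b^2 := by
        rw [hMx, dotProduct_smul, smul_eq_mul, hxw x, ← hb]; ring
      have hxMu : x ⬝ᵥ (M *ᵥ u) = b := by rw [hu', hxw x]
      set y : Fin s → ℝ := x - (b / t) • u with hy
      have hyMy : y ⬝ᵥ (M *ᵥ y) = 0 := by
        rw [hy]
        rw [Matrix.mulVec_sub, Matrix.mulVec_smul, dotProduct_sub,
          sub_dotProduct, sub_dotProduct, dotProduct_smul,
          dotProduct_smul, smul_dotProduct, smul_dotProduct,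
          smul_eq_mul, smul_eq_mul, smul_eq_mul, smul_eq_mul, hsymu x, hxMu, hxMx, ← ht]
        rw [hlam]; field_simp
        ring
      have hMy : M *ᵥ y = 0 := by
        have := (hM.dotProduct_mulVec_zero_iff y).mp (by simpa using hyMy)
        exact this
      have hymem : y ∈ K := hMy
      have : x = y + (b / t) • u := by rw [hy]; abel
      rw [this]
      exact Submodule.add_mem _ (Submodule.mem_sup_left hymem)
        (Submodule.mem_sup_right (Submodule.smul_mem _ _ (Submodule.mem_span_singleton_self u)))
    · rw [sup_le_iff]
      constructor
      · intro x hx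
        have hMx : M *ᵥ x = 0 := hx
        have hNx : N *ᵥ x = 0 := hker hx
        show (M - lam • N) *ᵥ x = 0
        rw [Matrix.sub_mulVec, Matrix.smul_mulVec, hMx, hNx, smul_zero, sub_zero]
      · rw [Submodule.span_singleton_le_iff_mem]
        show (M - lam • N) *ᵥ u = 0
        rw [hM' u]
        have hwu : w ⬝ᵥ u = t := by rw [← hxw u, ← hu', ← ht]
        rw [hwu, hlam, one_div, inv_mul_cancel₀ htpos.ne', one_smul, hu', sub_self]
  -- dimension count
  have hinf : K ⊓ Submodule.span ℝ {u} = ⊥ := by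
    rw [Submodule.eq_bot_iff]
    rintro x ⟨hxK, hxS⟩
    have hxS' : x ∈ Submodule.span ℝ {u} := hxS
    rw [Submodule.mem_span_singleton] at hxS'
    obtain ⟨c, rfl⟩ := hxS'
    rcases eq_or_ne c 0 with h | h
    · rw [h, zero_smul]
    · exfalso
      have : M *ᵥ (c • u) = 0 := hxK
      rw [Matrix.mulVec_smul, hu'] at this
      exact hwne (by simpa [h] using this)
  have hfr : Module.finrank ℝ (LinearMap.ker (M - lam • N).mulVecLin)
      = Module.finrank ℝ K + 1 := by
    rw [hkernew]
    have h1 := Submodule.finrank_sup_add_finrank_inf_eq K (Submodule.span ℝ {u})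
    rw [hinf, finrank_bot, add_zero, finrank_span_singleton hune] at h1
    exact h1
  have hrn1 : (M - lam • N).rank + Module.finrank ℝ (LinearMap.ker (M - lam • N).mulVecLin)
      = s := by
    have := LinearMap.finrank_range_add_finrank_ker (M - lam • N).mulVecLin
    rw [show Module.finrank ℝ (Fin s → ℝ) = s from Module.finrank_fin_fun ℝ] at this
    exact this
  have hrn2 : M.rank + Module.finrank ℝ K = s := by
    have := LinearMap.finrank_range_add_finrank_ker M.mulVecLin
    rw [show Module.finrank ℝ (Fin s → ℝ) = s from Module.finrank_fin_fun ℝ] at this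
    exact this
  omega
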